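/- (Theorem 4.1, expected generalization bound under distribution shift.) Let P̃ be a target Borel probability measure on ℝ^m with finite first moment, let ξ₁,…,ξ_N be i.i.d. from P*, P̂_N their empirical measure, τ_ε := (1+ε)·inf_{x∈𝒳} E_{P̂_N}[h(x,ξ)] (a.s. finite), and (x̂_N, k̂_N) a random pair a.s. RS-feasible for τ_ε with respect to P̂_N. Suppose that for constants c₁, c₂ > 0, a > 1 and p := max(m,2), D := d_W(P*, P̂_N) satisfies P{D ≥ r} ≤ c₁·exp(−c₂·N·r^p) for r ∈ (0,1] and P{D ≥ r} ≤ c₁·exp(−c₂·N·r^a) for r > 1. Then, with J̃ := inf_{x∈𝒳} E_{P̃}[h(x,ξ)] assumed finite, E[ E_{P̃}[h(x̂_N,ξ)] − J̃ ] ≤ ε·J̃ + (2+ε)·L·d_W(P*, P̃) + (2+ε)·L·( C_p·N^{−1/p} + C_a·N^{−1/a} ), where C_p = ∫₀^∞ c₁ e^{−c₂ t^p} dt, C_a = ∫₀^∞ c₁ e^{−c₂ t^a} dt, and the outer expectation is over the sample data. -/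

import Mathlib

open MeasureTheory

noncomputable section

abbrev Vec (m : ℕ) := EuclideanSpace ℝ (Fin m)

/-- A coupling of two Borel probability measures on `Vec m`. -/
def IsCoupling {m : ℕ} (γ : Measure (Vec m × Vec m)) (P Q : Measure (Vec m)) : Prop :=
  IsProbabilityMeasure γ ∧ γ.map Prod.fst = P ∧ γ.map Prod.snd = Q

/-- Type-1 Wasserstein distance: infimum of `∫ ‖ξ₁ - ξ₂‖₂ dγ` over couplings `γ`. -/
noncomputable def wDist {m : ℕ} (P Q : Measure (Vec m)) : ℝ :=
  sInf {c : ℝ | ∃ γ : Measure (Vec m × Vec m), IsCoupling γ P Q ∧ c = ∫ p, ‖p.1 - p.2‖ ∂γ}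

/-- `(x, k)` is RS-feasible for reference value `τ` with respect to `Phat`. -/
def RSFeasible {m : ℕ} {X : Type*} (h : X → Vec m → ℝ)
    (Phat : Measure (Vec m)) (τ : ℝ) (x : X) (k : ℝ) : Prop :=
  0 ≤ k ∧ ∀ P : Measure (Vec m), IsProbabilityMeasure P →
    Integrable (fun ξ => ‖ξ‖) P → (∫ ξ, h x ξ ∂P) - τ ≤ k * wDist P Phat

/-- Empirical measure `(1/N) ∑ δ_{x i}`. -/
noncomputable def empMeas {m N : ℕ} (xs : Fin N → Vec m) : Measure (Vec m) :=
  (N : ENNReal)⁻¹ • ∑ i : Fin N, Measure.dirac (xs i)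


lemma wDist_nonneg' {m : ℕ} (P Q : Measure (Vec m)) : 0 ≤ wDist P Q := by
  apply Real.sInf_nonneg
  rintro c ⟨γ, hγ, rfl⟩
  exact integral_nonneg fun p => norm_nonneg _

lemma wDist_self' {m : ℕ} (P : Measure (Vec m)) [IsProbabilityMeasure P] : wDist P P = 0 := by
  have hd : Measurable (fun ξ : Vec m => (ξ, ξ)) := measurable_id.prodMk measurable_id
  have h0 : (0 : ℝ) ∈ {c : ℝ | ∃ γ : Measure (Vec m × Vec m), IsCoupling γ P P ∧
      c = ∫ p, ‖p.1 - p.2‖ ∂γ} := by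
    refine ⟨P.map (fun ξ => (ξ, ξ)), ⟨Measure.isProbabilityMeasure_map hd.aemeasurable, ?_, ?_⟩, ?_⟩
    · rw [Measure.map_map measurable_fst hd]; exact Measure.map_id
    · rw [Measure.map_map measurable_snd hd]; exact Measure.map_id
    · rw [integral_map (f := fun p : Vec m × Vec m => ‖p.1 - p.2‖) hd.aemeasurable
        ((continuous_fst.sub continuous_snd).norm.aestronglyMeasurable)]
      simp
  refine le_antisymm (csInf_le ⟨0, ?_⟩ h0) (wDist_nonneg' P P)
  rintro c ⟨γ, hγ, rfl⟩
  exact integral_nonneg fun p => norm_nonneg _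

lemma coupling_bound {m : ℕ} {X : Type*} (h : X → Vec m → ℝ) {L : ℝ}
    (hLip : ∀ x ξ η, |h x ξ - h x η| ≤ L * ‖ξ - η‖) (x : X)
    {P Q : Measure (Vec m)}
    (hPm : Integrable (fun ξ => ‖ξ‖) P) (hQm : Integrable (fun ξ => ‖ξ‖) Q)
    (hPh : Integrable (h x) P) (hQh : Integrable (h x) Q)
    {γ : Measure (Vec m × Vec m)} (hγ : IsCoupling γ P Q) :
    |(∫ ξ, h x ξ ∂P) - (∫ ξ, h x ξ ∂Q)| ≤ L * ∫ p, ‖p.1 - p.2‖ ∂γ := by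
  obtain ⟨hprob, hfst, hsnd⟩ := hγ
  subst hfst; subst hsnd
  have hmf : AEMeasurable (Prod.fst : Vec m × Vec m → Vec m) γ := measurable_fst.aemeasurable
  have hms : AEMeasurable (Prod.snd : Vec m × Vec m → Vec m) γ := measurable_snd.aemeasurable
  have h1 : Integrable (fun p : Vec m × Vec m => h x p.1) γ :=
    (integrable_map_measure hPh.1 hmf).mp hPh
  have h2 : Integrable (fun p : Vec m × Vec m => h x p.2) γ :=
    (integrable_map_measure hQh.1 hms).mp hQh
  have hn1 : Integrable (fun p : Vec m × Vec m => ‖p.1‖) γ :=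
    (integrable_map_measure hPm.1 hmf).mp hPm
  have hn2 : Integrable (fun p : Vec m × Vec m => ‖p.2‖) γ :=
    (integrable_map_measure hQm.1 hms).mp hQm
  have hcost : Integrable (fun p : Vec m × Vec m => ‖p.1 - p.2‖) γ := by
    refine (hn1.add hn2).mono'
      (continuous_fst.sub continuous_snd).norm.aestronglyMeasurable ?_
    filter_upwards with p
    rw [norm_norm]
    exact norm_sub_le _ _
  have e1 : ∫ ξ, h x ξ ∂(γ.map Prod.fst) = ∫ p, h x p.1 ∂γ := integral_map hmf hPh.1
  have e2 : ∫ ξ, h x ξ ∂(γ.map Prod.snd) = ∫ p, h x p.2 ∂γ := integral_map hms hQh.1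
  rw [e1, e2, ← integral_sub h1 h2]
  calc |∫ p, (h x p.1 - h x p.2) ∂γ| ≤ ∫ p, L * ‖p.1 - p.2‖ ∂γ := by
        rw [← Real.norm_eq_abs]
        refine norm_integral_le_of_norm_le (hcost.const_mul L) ?_
        filter_upwards with p
        rw [Real.norm_eq_abs]
        exact hLip x p.1 p.2
    _ = L * ∫ p, ‖p.1 - p.2‖ ∂γ := integral_const_mul L (fun p : Vec m × Vec m => ‖p.1 - p.2‖)

lemma abs_integral_sub_le_wDist {m : ℕ} {X : Type*} (h : X → Vec m → ℝ) {L : ℝ} (hL : 0 ≤ L)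
    (hLip : ∀ x ξ η, |h x ξ - h x η| ≤ L * ‖ξ - η‖) (x : X)
    (P Q : Measure (Vec m)) [IsProbabilityMeasure P] [IsProbabilityMeasure Q]
    (hPm : Integrable (fun ξ => ‖ξ‖) P) (hQm : Integrable (fun ξ => ‖ξ‖) Q)
    (hPh : Integrable (h x) P) (hQh : Integrable (h x) Q) :
    |(∫ ξ, h x ξ ∂P) - (∫ ξ, h x ξ ∂Q)| ≤ L * wDist P Q := by
  set S := {c : ℝ | ∃ γ : Measure (Vec m × Vec m), IsCoupling γ P Q ∧
      c = ∫ p, ‖p.1 - p.2‖ ∂γ} with hS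
  have hne : S.Nonempty := by
    refine ⟨_, P.prod Q, ⟨inferInstance, ?_, ?_⟩, rfl⟩
    · rw [Measure.map_fst_prod]; simp
    · rw [Measure.map_snd_prod]; simp
  rcases hL.eq_or_lt with hL0 | hLpos
  · obtain ⟨c, γ, hγ, hc⟩ := hne
    have := coupling_bound h hLip x hPm hQm hPh hQh hγ
    rw [← hL0] at this ⊢
    simpa using this
  · have hlb : |(∫ ξ, h x ξ ∂P) - (∫ ξ, h x ξ ∂Q)| / L ≤ sInf S := by
      refine le_csInf hne ?_
      rintro c ⟨γ, hγ, rfl⟩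
      exact (div_le_iff₀' hLpos).mpr (coupling_bound h hLip x hPm hQm hPh hQh hγ)
    calc |(∫ ξ, h x ξ ∂P) - (∫ ξ, h x ξ ∂Q)|
        = L * (|(∫ ξ, h x ξ ∂P) - (∫ ξ, h x ξ ∂Q)| / L) := by field_simp
      _ ≤ L * sInf S := by exact mul_le_mul_of_nonneg_left hlb hL

lemma empMeas_prob {m N : ℕ} (hN : 0 < N) (xs : Fin N → Vec m) :
    IsProbabilityMeasure (empMeas xs) := by
  constructor
  rw [empMeas, Measure.smul_apply, Measure.finset_sum_apply]
  simp only [Measure.dirac_apply' _ MeasurableSet.univ, Set.indicator_univ,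
    Finset.sum_const, Finset.card_univ, Fintype.card_fin, nsmul_eq_mul, mul_one,
    Pi.one_apply, smul_eq_mul]
  exact ENNReal.inv_mul_cancel (by exact_mod_cast hN.ne') (ENNReal.natCast_ne_top N)

lemma empMeas_integrable {m N : ℕ} (hN : 0 < N) (f : Vec m → ℝ) (hf : Continuous f)
    (xs : Fin N → Vec m) : Integrable f (empMeas xs) := by
  refine ⟨hf.aestronglyMeasurable, ?_⟩
  rw [hasFiniteIntegral_iff_norm, empMeas, lintegral_smul_measure,
    lintegral_finset_sum_measure]
  have hl : ∀ i, ∫⁻ a, ENNReal.ofReal ‖f a‖ ∂(Measure.dirac (xs i)) = ENNReal.ofReal ‖f (xs i)‖ :=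
    fun i => lintegral_dirac' _ (ENNReal.measurable_ofReal.comp hf.norm.measurable)
  simp only [hl, smul_eq_mul]
  refine ENNReal.mul_lt_top ?_ ?_
  · exact ENNReal.inv_lt_top.mpr (by exact_mod_cast hN)
  · exact ENNReal.sum_lt_top.mpr fun i _ => ENNReal.ofReal_lt_top

lemma integrableOn_exp_aux {b q : ℝ} (hb : 0 < b) (hq : 1 ≤ q) (c₁ : ℝ) :
    IntegrableOn (fun t : ℝ => c₁ * Real.exp (-(b * t ^ q))) (Set.Ioi 0) := by
  have h := (integrableOn_rpow_mul_exp_neg_mul_rpow (s := 0) (by norm_num) (by linarith) hb).const_mul c₁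
  refine IntegrableOn.congr_fun h (fun t ht => ?_) measurableSet_Ioi
  rw [Real.rpow_zero, one_mul, neg_mul]

lemma measurable_exp_aux (c₁ b : ℝ) {q : ℝ} (hq : 0 ≤ q) :
    Measurable fun t : ℝ => c₁ * Real.exp (-(b * t ^ q)) := by
  have : Continuous fun t : ℝ => c₁ * Real.exp (-(b * t ^ q)) := by
    have h1 : Continuous fun t : ℝ => t ^ q := Real.continuous_rpow_const hq
    continuity
  exact this.measurable

lemma integral_exp_scale {c₁ c₂ q : ℝ} (hq0 : q ≠ 0) {N : ℕ} (hN : 0 < N) :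
    ∫ t in Set.Ioi (0:ℝ), c₁ * Real.exp (-(c₂ * N * t ^ q)) =
      (∫ t in Set.Ioi (0:ℝ), c₁ * Real.exp (-(c₂ * t ^ q))) * (N:ℝ) ^ (-1/q) := by
  have hNpos : (0:ℝ) < N := by exact_mod_cast hN
  set b : ℝ := (N:ℝ) ^ (1/q) with hbdef
  have hb : 0 < b := Real.rpow_pos_of_pos hNpos _
  have hbq : b ^ q = (N:ℝ) := by
    rw [hbdef, ← Real.rpow_mul hNpos.le, one_div_mul_cancel hq0, Real.rpow_one]
  have key := MeasureTheory.integral_comp_mul_left_Ioi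
      (fun s => c₁ * Real.exp (-(c₂ * s ^ q))) 0 hb
  rw [mul_zero] at key
  have congr1 : ∫ t in Set.Ioi (0:ℝ), c₁ * Real.exp (-(c₂ * (b * t) ^ q)) =
      ∫ t in Set.Ioi (0:ℝ), c₁ * Real.exp (-(c₂ * N * t ^ q)) := by
    refine setIntegral_congr_fun measurableSet_Ioi fun t ht => ?_
    rw [Real.mul_rpow hb.le (le_of_lt ht), hbq, ← mul_assoc]
  rw [congr1] at key
  rw [key, smul_eq_mul, mul_comm]
  congr 1
  rw [hbdef, neg_div, Real.rpow_neg hNpos.le]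

lemma D_expectation_bound {Ω : Type*} [MeasurableSpace Ω] (μ : Measure Ω) [IsProbabilityMeasure μ]
    (D : Ω → ℝ) (hDm : Measurable D) (hDnn : ∀ ω, 0 ≤ D ω)
    {c₁ c₂ p a : ℝ} (hc₁ : 0 < c₁) (hc₂ : 0 < c₂) (hp : 2 ≤ p) (ha : 1 < a)
    {N : ℕ} (hN : 0 < N)
    (htail₁ : ∀ r : ℝ, 0 < r → r ≤ 1 →
      μ {ω | r ≤ D ω} ≤ ENNReal.ofReal (c₁ * Real.exp (-(c₂ * N * r ^ p))))
    (htail₂ : ∀ r : ℝ, 1 < r →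
      μ {ω | r ≤ D ω} ≤ ENNReal.ofReal (c₁ * Real.exp (-(c₂ * N * r ^ a)))) :
    Integrable D μ ∧ ∫ ω, D ω ∂μ ≤
      (∫ t in Set.Ioi (0:ℝ), c₁ * Real.exp (-(c₂ * t ^ p))) * (N:ℝ) ^ (-1/p)
      + (∫ t in Set.Ioi (0:ℝ), c₁ * Real.exp (-(c₂ * t ^ a))) * (N:ℝ) ^ (-1/a) := by
  have hp1 : (1:ℝ) ≤ p := by linarith
  have ha1 : (1:ℝ) ≤ a := ha.le
  have hNc : (0:ℝ) < c₂ * N := by positivity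
  have hint_p : IntegrableOn (fun t : ℝ => c₁ * Real.exp (-(c₂ * N * t ^ p))) (Set.Ioi 0) :=
    integrableOn_exp_aux hNc hp1 c₁
  have hint_a : IntegrableOn (fun t : ℝ => c₁ * Real.exp (-(c₂ * N * t ^ a))) (Set.Ioi 0) :=
    integrableOn_exp_aux hNc ha1 c₁
  set Bp : ℝ := ∫ t in Set.Ioi (0:ℝ), c₁ * Real.exp (-(c₂ * N * t ^ p)) with hBp
  set Ba : ℝ := ∫ t in Set.Ioi (0:ℝ), c₁ * Real.exp (-(c₂ * N * t ^ a)) with hBa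
  have hBpnn : 0 ≤ Bp := setIntegral_nonneg measurableSet_Ioi fun t _ => by positivity
  have hBann : 0 ≤ Ba := setIntegral_nonneg measurableSet_Ioi fun t _ => by positivity
  have lc := lintegral_eq_lintegral_meas_lt μ (Filter.Eventually.of_forall hDnn)
    hDm.aemeasurable
  have step1 : ∫⁻ t in Set.Ioi (0:ℝ), μ {ω | t < D ω} ≤
      ∫⁻ t in Set.Ioi (0:ℝ), (ENNReal.ofReal (c₁ * Real.exp (-(c₂ * N * t ^ p)))
        + ENNReal.ofReal (c₁ * Real.exp (-(c₂ * N * t ^ a)))) := by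
    refine lintegral_mono_ae ((ae_restrict_iff' measurableSet_Ioi).mpr
      (Filter.Eventually.of_forall fun t ht => ?_))
    have hsub : μ {ω | t < D ω} ≤ μ {ω | t ≤ D ω} :=
      measure_mono fun ω hω => (le_of_lt hω : t ≤ D ω)
    rcases le_or_gt t 1 with h1 | h1
    · exact hsub.trans ((htail₁ t ht h1).trans le_self_add)
    · exact hsub.trans ((htail₂ t h1).trans le_add_self)
  have step2 : ∫⁻ t in Set.Ioi (0:ℝ), (ENNReal.ofReal (c₁ * Real.exp (-(c₂ * N * t ^ p)))
        + ENNReal.ofReal (c₁ * Real.exp (-(c₂ * N * t ^ a))))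
      = ENNReal.ofReal Bp + ENNReal.ofReal Ba := by
    rw [lintegral_add_left ((measurable_exp_aux c₁ (c₂*N) (by linarith : (0:ℝ) ≤ p)).ennreal_ofReal),
      ← ofReal_integral_eq_lintegral_ofReal hint_p
        (Filter.Eventually.of_forall fun t => by positivity),
      ← ofReal_integral_eq_lintegral_ofReal hint_a
        (Filter.Eventually.of_forall fun t => by positivity)]
  have keyB : ∫⁻ ω, ENNReal.ofReal (D ω) ∂μ ≤ ENNReal.ofReal (Bp + Ba) := by
    rw [lc]
    refine step1.trans ?_
    rw [step2, ENNReal.ofReal_add hBpnn hBann]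
  have hDint : Integrable D μ := ⟨hDm.aestronglyMeasurable,
    (hasFiniteIntegral_iff_ofReal (Filter.Eventually.of_forall hDnn)).mpr
      (keyB.trans_lt ENNReal.ofReal_lt_top)⟩
  refine ⟨hDint, ?_⟩
  have heq : ∫ ω, D ω ∂μ = (∫⁻ ω, ENNReal.ofReal (D ω) ∂μ).toReal :=
    integral_eq_lintegral_of_nonneg_ae (Filter.Eventually.of_forall hDnn)
      hDm.aestronglyMeasurable
  rw [heq]
  calc (∫⁻ ω, ENNReal.ofReal (D ω) ∂μ).toReal
      ≤ (ENNReal.ofReal (Bp + Ba)).toReal :=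
        ENNReal.toReal_mono ENNReal.ofReal_ne_top keyB
    _ = Bp + Ba := ENNReal.toReal_ofReal (by linarith)
    _ = _ := by
        rw [hBp, hBa, integral_exp_scale (by linarith : p ≠ 0) hN,
          integral_exp_scale (by linarith : a ≠ 0) hN]


/-- Theorem 4.1, expected generalization bound under shift:
E[ E_{Ptilde}[h(xhat_N,.)] - Jtilde ] <= eps Jtilde + (2+eps) L d_W(P*,Ptilde)
  + (2+eps) L (C_p N^{-1/p} + C_a N^{-1/a}). -/
theorem expected_generalization_bound_shift {m N : ℕ} (hN : 0 < N)
    {X : Type*} [Nonempty X]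
    {Ω : Type*} [MeasurableSpace Ω] (μ : Measure Ω) [IsProbabilityMeasure μ]
    (h : X → Vec m → ℝ) (L : ℝ) (hL : 0 ≤ L)
    (hLip : ∀ x ξ η, |h x ξ - h x η| ≤ L * ‖ξ - η‖)
    (hInt : ∀ x (P : Measure (Vec m)), IsProbabilityMeasure P →
      Integrable (fun ξ => ‖ξ‖) P → Integrable (h x) P)
    -- sampling distribution and target distribution
    (Pstar Ptilde : Measure (Vec m))
    [IsProbabilityMeasure Pstar] [IsProbabilityMeasure Ptilde]
    (hPstarmom : Integrable (fun ξ => ‖ξ‖) Pstar)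
    (hPtildemom : Integrable (fun ξ => ‖ξ‖) Ptilde)
    -- i.i.d. samples from Pstar
    (ξs : Fin N → Ω → Vec m) (hmeas : ∀ i, Measurable (ξs i))
    (hindep : ProbabilityTheory.iIndepFun ξs μ)
    (hdist : ∀ i, μ.map (ξs i) = Pstar)
    -- empirical measure
    (Phat : Ω → Measure (Vec m)) (hPhat : ∀ ω, Phat ω = empMeas (fun i => ξs i ω))
    -- reference value
    (ε : ℝ) (hε : 0 < ε)
    (τ : Ω → ℝ) (hτ : ∀ ω, τ ω = (1 + ε) * ⨅ x, ∫ ξ, h x ξ ∂(Phat ω))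
    (hfin : ∀ᵐ ω ∂μ, BddBelow (Set.range fun x => ∫ ξ, h x ξ ∂(Phat ω)))
    (hfinPtilde : BddBelow (Set.range fun x => ∫ ξ, h x ξ ∂Ptilde))
    -- almost surely RS-feasible random pair
    (xhat : Ω → X) (khat : Ω → ℝ)
    (hfeas : ∀ᵐ ω ∂μ, RSFeasible h (Phat ω) (τ ω) (xhat ω) (khat ω))
    (hxhatmeas : Measurable fun ω => ∫ ξ, h (xhat ω) ξ ∂Ptilde)
    -- two-regime concentration of D = d_W(Pstar, Phat_N)
    (c₁ c₂ a : ℝ) (hc₁ : 0 < c₁) (hc₂ : 0 < c₂) (ha : 1 < a)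
    (hDmeas : Measurable fun ω => wDist Pstar (Phat ω))
    (htail₁ : ∀ r : ℝ, 0 < r → r ≤ 1 →
      μ {ω | r ≤ wDist Pstar (Phat ω)} ≤
        ENNReal.ofReal (c₁ * Real.exp (-(c₂ * N * r ^ (max (m : ℝ) 2)))))
    (htail₂ : ∀ r : ℝ, 1 < r →
      μ {ω | r ≤ wDist Pstar (Phat ω)} ≤
        ENNReal.ofReal (c₁ * Real.exp (-(c₂ * N * r ^ a)))) :
    (∫ ω, ((∫ ξ, h (xhat ω) ξ ∂Ptilde) - (⨅ x, ∫ ξ, h x ξ ∂Ptilde)) ∂μ) ≤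
      ε * (⨅ x, ∫ ξ, h x ξ ∂Ptilde) + (2 + ε) * L * wDist Pstar Ptilde
        + (2 + ε) * L *
          ((∫ t in Set.Ioi (0 : ℝ), c₁ * Real.exp (-(c₂ * t ^ (max (m : ℝ) 2))))
              * (N : ℝ) ^ (-1 / (max (m : ℝ) 2))
            + (∫ t in Set.Ioi (0 : ℝ), c₁ * Real.exp (-(c₂ * t ^ a)))
              * (N : ℝ) ^ (-1 / a)) := by
  have hp2 : (2:ℝ) ≤ max (m:ℝ) 2 := le_max_right _ _
  set p := max (m:ℝ) 2 with hpdef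
  set Jt := ⨅ x, ∫ ξ, h x ξ ∂Ptilde with hJt
  set dT := wDist Pstar Ptilde with hdT
  set D : Ω → ℝ := fun ω => wDist Pstar (Phat ω) with hDdef
  have hDnn : ∀ ω, 0 ≤ D ω := fun ω => wDist_nonneg' _ _
  obtain ⟨hDint, hDbound⟩ :=
    D_expectation_bound μ D hDmeas hDnn hc₁ hc₂ hp2 ha hN htail₁ htail₂
  have hPhatProb : ∀ ω, IsProbabilityMeasure (Phat ω) := fun ω => by
    rw [hPhat ω]; exact empMeas_prob hN _
  have hPhatmom : ∀ ω, Integrable (fun ξ => ‖ξ‖) (Phat ω) := fun ω => by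
    rw [hPhat ω]; exact empMeas_integrable hN _ continuous_norm _
  set c : ℝ := (2 + ε) * L with hc
  set K : ℝ := ε * Jt + c * dT with hK
  have hcnn : 0 ≤ c := mul_nonneg (by linarith) hL
  have hdTnn : 0 ≤ dT := wDist_nonneg' _ _
  have hbound : ∀ᵐ ω ∂μ, 0 ≤ (∫ ξ, h (xhat ω) ξ ∂Ptilde) - Jt ∧
      (∫ ξ, h (xhat ω) ξ ∂Ptilde) - Jt ≤ K + c * D ω := by
    filter_upwards [hfeas, hfin] with ω hfe hfi
    haveI := hPhatProb ω
    have hmom := hPhatmom ω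
    have hIP : ∀ x, Integrable (h x) Pstar := fun x => hInt x Pstar inferInstance hPstarmom
    have hIT : ∀ x, Integrable (h x) Ptilde := fun x => hInt x Ptilde inferInstance hPtildemom
    have hIH : ∀ x, Integrable (h x) (Phat ω) := fun x => hInt x (Phat ω) inferInstance hmom
    have hge : Jt ≤ ∫ ξ, h (xhat ω) ξ ∂Ptilde := ciInf_le hfinPtilde (xhat ω)
    refine ⟨by linarith, ?_⟩
    obtain ⟨hknn, hfeas2⟩ := hfe
    have h0 : (∫ ξ, h (xhat ω) ξ ∂(Phat ω)) - τ ω ≤ khat ω * wDist (Phat ω) (Phat ω) :=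
      hfeas2 (Phat ω) inferInstance hmom
    rw [wDist_self' (Phat ω), mul_zero] at h0
    have t1 : |(∫ ξ, h (xhat ω) ξ ∂Pstar) - (∫ ξ, h (xhat ω) ξ ∂Ptilde)| ≤ L * dT :=
      abs_integral_sub_le_wDist h hL hLip (xhat ω) Pstar Ptilde hPstarmom hPtildemom
        (hIP _) (hIT _)
    have t2 : |(∫ ξ, h (xhat ω) ξ ∂Pstar) - (∫ ξ, h (xhat ω) ξ ∂(Phat ω))| ≤ L * D ω :=
      abs_integral_sub_le_wDist h hL hLip (xhat ω) Pstar (Phat ω) hPstarmom hmom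
        (hIP _) (hIH _)
    have hJhat : (⨅ x, ∫ ξ, h x ξ ∂(Phat ω)) ≤ Jt + L * (D ω + dT) := by
      have step : ∀ x, (⨅ x, ∫ ξ, h x ξ ∂(Phat ω)) - L * (D ω + dT) ≤ ∫ ξ, h x ξ ∂Ptilde := by
        intro x
        have u1 : |(∫ ξ, h x ξ ∂Pstar) - (∫ ξ, h x ξ ∂(Phat ω))| ≤ L * D ω :=
          abs_integral_sub_le_wDist h hL hLip x Pstar (Phat ω) hPstarmom hmom (hIP _) (hIH _)
        have u2 : |(∫ ξ, h x ξ ∂Pstar) - (∫ ξ, h x ξ ∂Ptilde)| ≤ L * dT :=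
          abs_integral_sub_le_wDist h hL hLip x Pstar Ptilde hPstarmom hPtildemom
            (hIP _) (hIT _)
        have u3 : (⨅ x, ∫ ξ, h x ξ ∂(Phat ω)) ≤ ∫ ξ, h x ξ ∂(Phat ω) := ciInf_le hfi x
        rw [abs_le] at u1 u2
        have := u1.1; have := u1.2; have := u2.1; have := u2.2
        linarith
      have hle := le_ciInf step
      rw [← hJt] at hle
      linarith
    rw [abs_le] at t1 t2
    have hτω := hτ ω
    have hmul : (1 + ε) * (⨅ x, ∫ ξ, h x ξ ∂(Phat ω)) ≤ (1 + ε) * (Jt + L * (D ω + dT)) :=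
      mul_le_mul_of_nonneg_left hJhat (by linarith)
    have hDnnω := hDnn ω
    have step1 : (∫ ξ, h (xhat ω) ξ ∂Ptilde) - Jt ≤
        (1 + ε) * (Jt + L * (D ω + dT)) + L * D ω + L * dT - Jt := by
      have := t1.1; have := t1.2; have := t2.1; have := t2.2
      linarith
    refine step1.trans ?_
    rw [hK, hc]
    ring_nf
    nlinarith [hDnnω, hdTnn, hL]
  have hgmeas : AEStronglyMeasurable (fun ω => (∫ ξ, h (xhat ω) ξ ∂Ptilde) - Jt) μ :=
    (hxhatmeas.sub measurable_const).aestronglyMeasurable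
  have hbint : Integrable (fun ω => K + c * D ω) μ :=
    (integrable_const K).add (hDint.const_mul c)
  have hgint : Integrable (fun ω => (∫ ξ, h (xhat ω) ξ ∂Ptilde) - Jt) μ := by
    refine hbint.mono' hgmeas ?_
    filter_upwards [hbound] with ω hω
    rw [Real.norm_eq_abs, abs_of_nonneg hω.1]
    exact hω.2
  have hmono : ∫ ω, ((∫ ξ, h (xhat ω) ξ ∂Ptilde) - Jt) ∂μ ≤ ∫ ω, (K + c * D ω) ∂μ :=
    integral_mono_ae hgint hbint (hbound.mono fun ω hω => hω.2)
  refine hmono.trans ?_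
  rw [integral_add (integrable_const K) (hDint.const_mul c), integral_const_mul,
    integral_const]
  simp only [measure_univ, probReal_univ, ENNReal.toReal_one, smul_eq_mul, one_mul]
  have h2 := mul_le_mul_of_nonneg_left hDbound hcnn
  rw [hK]
  linarith
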